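/- Let X be a nonempty finite set and R a family of subsets of X, and let 0 < ε < 1. Set M = ⌈400/ε²⌉ and, for each integer i with 1 ≤ i ≤ M, set ν_i = i·ε²/400 and α_i = 1/(2√i). If a nonempty subset Z ⊆ X is a (ν_i, α_i)-sample for (X,R) for every i ∈ {1, …, M}, then Z is a sensitive ε-approximation for (X,R); that is, |X̄(r,Z) − X̄(r,X)| ≤ (ε/2)·(X̄(r,X)^{1/2} + ε) for every r ∈ R. -/

import Mathlib

/-- The measure of a range `r` in a finite set `Z`: `|Z ∩ r| / |Z|`. -/
noncomputable def meas {γ : Type*} (r : Set γ) (Z : Finset γ) : ℝ :=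
  (((↑Z : Set γ) ∩ r).ncard : ℝ) / (Z.card : ℝ)

/-- The distance `d_ν(a,b) = |a − b| / (a + b + ν)`. -/
noncomputable def dnu (ν a b : ℝ) : ℝ := |a - b| / (a + b + ν)

set_option maxHeartbeats 1000000 in
/-- If a nonempty `Z ⊆ X` is a `(ν_i,α_i)`-sample for `(X,R)` for every
`1 ≤ i ≤ M = ⌈400/ε²⌉`, where `ν_i = i·ε²/400` and `α_i = 1/(2√i)`, then `Z`
is a sensitive `ε`-approximation for `(X,R)`. -/
theorem samples_to_sensitive_approx {γ : Type*} (X : Finset γ) (hX : X.Nonempty)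
    (R : Set (Set γ)) (ε : ℝ) (hε0 : 0 < ε) (hε1 : ε < 1)
    (Z : Finset γ) (hZX : Z ⊆ X) (hZ : Z.Nonempty)
    (hsample : ∀ i : ℕ, 1 ≤ i → i ≤ ⌈(400 : ℝ) / ε ^ 2⌉₊ →
      ∀ r ∈ R, dnu ((i : ℝ) * ε ^ 2 / 400) (meas r Z) (meas r X) <
        1 / (2 * Real.sqrt i)) :
    ∀ r ∈ R, |meas r Z - meas r X| ≤ (ε / 2) * (Real.sqrt (meas r X) + ε) := by
  intro r hr
  set a := meas r Z with ha_def
  set b := meas r X with hb_def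
  have ha : 0 ≤ a := by
    rw [ha_def]; unfold meas; positivity
  have hb : 0 ≤ b := by
    rw [hb_def]; unfold meas; positivity
  have hXcard : 0 < (X.card : ℝ) := by exact_mod_cast Finset.card_pos.mpr hX
  have hb1 : b ≤ 1 := by
    rw [hb_def]; unfold meas
    rw [div_le_one hXcard]
    have h1 : ((↑X : Set γ) ∩ r).ncard ≤ (↑X : Set γ).ncard :=
      Set.ncard_le_ncard Set.inter_subset_left (X.finite_toSet)
    rw [Set.ncard_coe_finset] at h1
    exact_mod_cast h1
  have hε2 : 0 < ε ^ 2 := by positivity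
  set x : ℝ := 400 * b / ε ^ 2 with hx_def
  have hx0 : 0 ≤ x := by positivity
  set i : ℕ := max 1 ⌈x⌉₊ with hi_def
  have hi1 : 1 ≤ i := le_max_left _ _
  have hipos : (0:ℝ) < (i:ℝ) := by exact_mod_cast hi1
  have hiM : i ≤ ⌈(400 : ℝ) / ε ^ 2⌉₊ := by
    apply max_le
    · exact Nat.one_le_ceil_iff.mpr (by positivity)
    · apply Nat.ceil_le_ceil
      rw [hx_def]
      gcongr
      linarith
  have hile : (i:ℝ) ≤ x + 1 := by
    rw [hi_def]
    push_cast
    apply max_le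
    · linarith
    · linarith [Nat.ceil_lt_add_one hx0]
  have hige : x ≤ (i:ℝ) := by
    refine le_trans (Nat.le_ceil x) ?_
    exact_mod_cast le_max_right 1 ⌈x⌉₊
  -- multiplicative versions
  have h400 : 400 * b ≤ (i:ℝ) * ε ^ 2 := by
    rw [hx_def, div_le_iff₀ hε2] at hige
    linarith
  have h401 : (i:ℝ) * ε ^ 2 ≤ 400 * b + ε ^ 2 := by
    have h2 := mul_le_mul_of_nonneg_right hile hε2.le
    have h3 : (x + 1) * ε ^ 2 = 400 * b + ε ^ 2 := by
      rw [hx_def]; field_simp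
    linarith [h3 ▸ h2]
  set t := |a - b| with ht_def
  have ht : 0 ≤ t := abs_nonneg _
  set s := Real.sqrt i with hs_def
  have hs1 : (1:ℝ) ≤ s := by
    rw [hs_def, show (1:ℝ) = Real.sqrt 1 by simp]
    exact Real.sqrt_le_sqrt (by exact_mod_cast hi1)
  have hs2 : s ^ 2 = (i:ℝ) := Real.sq_sqrt (le_of_lt hipos)
  set sb := Real.sqrt b with hsb_def
  have hsb0 : 0 ≤ sb := Real.sqrt_nonneg _
  have hsb2 : sb ^ 2 = b := Real.sq_sqrt hb
  clear_value a b x i t s sb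
  -- 20 * sb ≤ s * ε
  have hsε : 20 * sb ≤ s * ε := by
    have e1 : Real.sqrt (400 * b) = 20 * sb := by
      rw [show (400:ℝ) * b = (20 * sb) ^ 2 by nlinarith [hsb2]]
      exact Real.sqrt_sq (by positivity)
    have e2 : Real.sqrt ((i:ℝ) * ε ^ 2) = s * ε := by
      rw [show (i:ℝ) * ε ^ 2 = (s * ε) ^ 2 by nlinarith [hs2]]
      exact Real.sqrt_sq (by positivity)
    rw [← e1, ← e2]
    exact Real.sqrt_le_sqrt h400
  -- unfold hkey
  have hν : 0 < (i:ℝ) * ε ^ 2 / 400 := by positivity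
  have hD : 0 < a + b + (i:ℝ) * ε ^ 2 / 400 := by linarith
  have h2s : (0:ℝ) < 2 * s := by linarith
  have hkey := hsample i hi1 hiM r hr
  rw [dnu, ← ha_def, ← hb_def, ← ht_def, ← hs_def, div_lt_div_iff₀ hD h2s] at hkey
  -- key inequality
  have hab : a - b ≤ t := ht_def ▸ le_abs_self (a - b)
  have key : t * (2 * s - 1) < 3 * b + ε ^ 2 / 400 := by linarith [hkey, h401, hab, ht]
  clear hkey hsample

  rcases le_or_gt b (ε ^ 2 / 400) with hcase | hcase
  · linarith [key, mul_nonneg ht (by linarith : (0:ℝ) ≤ 2 * s - 2),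
      mul_nonneg hε0.le hsb0, sq_nonneg ε, hcase]
  · have hsbε : ε / 20 < sb := by
      nlinarith [hcase, hsb2, hε0, hsb0, (by linarith : (0:ℝ) ≤ ε / 20 + sb)]
    have h2sε : 20 * sb < (2 * s - 1) * ε := by nlinarith [hsε, hsbε, hε0]
    have hsbpos : 0 < sb := by linarith
    have hkt : t * (20 * sb) < (3 * b + ε ^ 2 / 400) * ε := by
      nlinarith [mul_le_mul_of_nonneg_left h2sε.le ht,
        mul_lt_mul_of_pos_right key hε0]
    have h5 : ε ^ 3 / 20 < sb * ε ^ 2 := by nlinarith [hsbε, hε2]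
    by_contra hcon
    push_neg at hcon
    have hmul := mul_lt_mul_of_pos_left hcon (by linarith : (0:ℝ) < 20 * sb)
    nlinarith [hmul, hkt, hsb2, h5, mul_nonneg hε0.le (sq_nonneg sb)]
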